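/- If B_MU is an orthonormal basis of ℂ^d mutually unbiased to B0, i.e., X(B_MU,B0)_{ij} = 1/d for all i,j, then B ≻^{B0} B_MU for every orthonormal basis B of ℂ^d. -/

import Mathlib

open Matrix

noncomputable def transMatrix {d : ℕ}
    (B C : OrthonormalBasis (Fin d) ℂ (EuclideanSpace ℂ (Fin d))) :
    Matrix (Fin d) (Fin d) ℝ :=
  Matrix.of fun i j => ‖(inner ℂ (B i) (C j) : ℂ)‖ ^ 2

def IsDoublyStochastic {d : ℕ} (M : Matrix (Fin d) (Fin d) ℝ) : Prop :=
  (∀ i j, 0 ≤ M i j) ∧ (∀ i, ∑ j, M i j = 1) ∧ (∀ j, ∑ i, M i j = 1)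

/-- `B1 ≻^{B0} B2` : there is a doubly stochastic `M` with `X(B2,B0) = M · X(B1,B0)`. -/
def BasisMaj {d : ℕ}
    (B0 B1 B2 : OrthonormalBasis (Fin d) ℂ (EuclideanSpace ℂ (Fin d))) : Prop :=
  ∃ M : Matrix (Fin d) (Fin d) ℝ, IsDoublyStochastic M ∧
    transMatrix B2 B0 = M * transMatrix B1 B0

lemma col_sum_transMatrix {d : ℕ}
    (B B0 : OrthonormalBasis (Fin d) ℂ (EuclideanSpace ℂ (Fin d))) (j : Fin d) :
    ∑ i, transMatrix B B0 i j = 1 := by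
  have h1 : ‖B.repr (B0 j)‖ = 1 := by
    rw [LinearIsometryEquiv.norm_map]; exact B0.orthonormal.1 j
  have h2 := PiLp.norm_sq_eq_of_L2 (fun _ : Fin d => ℂ) (B.repr (B0 j))
  rw [h1, one_pow] at h2
  rw [show (1:ℝ) = ∑ i, ‖B.repr (B0 j) i‖ ^ 2 from h2.symm ▸ rfl]
  refine Finset.sum_congr rfl fun i _ => ?_
  simp [transMatrix, B.repr_apply_apply]

/-- Measurement over any basis is more compatible than over a basis mutually
unbiased to `B0`: if `X(B_MU,B0)_{ij} = 1/d` for all `i,j` then `B ≻^{B0} B_MU`. -/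
theorem basisMaj_mutuallyUnbiased {d : ℕ}
    (B0 BMU : OrthonormalBasis (Fin d) ℂ (EuclideanSpace ℂ (Fin d)))
    (hMU : ∀ i j, transMatrix BMU B0 i j = 1 / (d : ℝ)) :
    ∀ B : OrthonormalBasis (Fin d) ℂ (EuclideanSpace ℂ (Fin d)),
      BasisMaj B0 B BMU := by
  intro B
  refine ⟨fun _ _ => 1 / d, ⟨fun i j => by positivity, ?_, ?_⟩, ?_⟩
  · intro i
    have hd : (0:ℝ) < d := by exact_mod_cast i.pos
    simp only [Finset.sum_const, Finset.card_univ, Fintype.card_fin, nsmul_eq_mul]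
    field_simp
  · intro j
    have hd : (0:ℝ) < d := by exact_mod_cast j.pos
    simp only [Finset.sum_const, Finset.card_univ, Fintype.card_fin, nsmul_eq_mul]
    field_simp
  · ext i j
    have hd : (0:ℝ) < d := by exact_mod_cast i.pos
    change transMatrix BMU B0 i j = ((Matrix.of (fun _ _ => 1 / (d:ℝ)) : Matrix (Fin d) (Fin d) ℝ) * transMatrix B B0) i j
    rw [hMU i j]; simp only [Matrix.mul_apply, Matrix.of_apply]
    rw [← Finset.mul_sum]
    rw [col_sum_transMatrix B B0 j, mul_one]
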